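/- For every n ≥ 2 and every x ∈ [0,1]^n, the polynomial f(δ) = ∏_{i=1}^n (1 + x_i δ) − δ has at most two roots in (0, ∞). -/

import Mathlib

open Set Polynomial

theorem at_most_two_positive_roots (n : ℕ) (hn : 2 ≤ n) (x : Fin n → ℝ)
    (hx : ∀ i, x i ∈ Set.Icc (0 : ℝ) 1) :
    Set.encard {δ : ℝ | 0 < δ ∧ (∏ i, (1 + x i * δ)) - δ = 0} ≤ 2 := by
  set S := {δ : ℝ | 0 < δ ∧ (∏ i, (1 + x i * δ)) - δ = 0} with hS
  -- affine factors are convex, monotone, nonneg on Ici 0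
  have haffc : ∀ c : ℝ, 0 ≤ c → ConvexOn ℝ (Set.Ici 0) (fun δ : ℝ => 1 + c * δ) := by
    intro c hc
    refine ⟨convex_Ici 0, fun p _ q _ a b ha hb hab => ?_⟩
    simp only [smul_eq_mul]
    nlinarith
  have haffm : ∀ c : ℝ, 0 ≤ c → MonotoneOn (fun δ : ℝ => 1 + c * δ) (Set.Ici 0) := by
    intro c hc p _ q _ hpq
    have := mul_le_mul_of_nonneg_left hpq hc
    dsimp; linarith
  -- the product is convex, monotone, nonneg on Ici 0
  have key : ∀ s : Finset (Fin n),
      ConvexOn ℝ (Set.Ici 0) (fun δ : ℝ => ∏ i ∈ s, (1 + x i * δ)) ∧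
      MonotoneOn (fun δ : ℝ => ∏ i ∈ s, (1 + x i * δ)) (Set.Ici 0) ∧
      ∀ δ ∈ Set.Ici (0 : ℝ), 0 ≤ ∏ i ∈ s, (1 + x i * δ) := by
    intro s
    induction s using Finset.induction_on with
    | empty =>
      simp only [Finset.prod_empty]
      exact ⟨convexOn_const 1 (convex_Ici 0), monotoneOn_const, by intro δ _; norm_num⟩
    | insert _ _ hnot ih =>
      rename_i a s
      obtain ⟨ihc, ihm, ihn⟩ := ih
      have hfn : ∀ δ ∈ Set.Ici (0 : ℝ), 0 ≤ 1 + x a * δ := by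
        intro δ hδ
        have := mul_nonneg (hx a).1 (mem_Ici.mp hδ)
        linarith
      simp only [Finset.prod_insert hnot]
      refine ⟨?_, ?_, ?_⟩
      · exact (haffc _ (hx a).1).mul ihc hfn ihn
          ((haffm _ (hx a).1).monovaryOn ihm)
      · intro p hp' q hq' hpq
        exact mul_le_mul (haffm _ (hx a).1 hp' hq' hpq) (ihm hp' hq' hpq)
          (ihn p hp') (hfn q hq')
      · exact fun δ hδ => mul_nonneg (hfn δ hδ) (ihn δ hδ)
  have hconv : ConvexOn ℝ (Set.Ici 0) (fun δ : ℝ => (∏ i, (1 + x i * δ)) - δ) :=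
    (key Finset.univ).1.sub (concaveOn_id (convex_Ici 0))
  -- the zero set of the whole function is finite (nonzero polynomial)
  have hfin : {δ : ℝ | (∏ i, (1 + x i * δ)) - δ = 0}.Finite := by
    set P : Polynomial ℝ := (∏ i, (1 + Polynomial.C (x i) * Polynomial.X)) - Polynomial.X with hP
    have heval : ∀ δ : ℝ, P.eval δ = (∏ i, (1 + x i * δ)) - δ := by
      intro δ; simp [hP, Polynomial.eval_prod]
    have hP0 : P ≠ 0 := by
      intro h
      have := heval 0
      rw [h] at this
      simp at this
    have := Polynomial.finite_setOf_isRoot hP0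
    refine this.subset ?_
    intro δ hδ
    simp only [Set.mem_setOf_eq, Polynomial.IsRoot, heval]
    exact hδ
  -- three positive roots are impossible
  have key3 : ∀ p q r : ℝ, p < q → q < r → p ∈ S → q ∈ S → r ∈ S → False := by
    intro p q r hpq hqr hp hq hr
    obtain ⟨hp0, hpz⟩ := hp
    obtain ⟨hq0, hqz⟩ := hq
    obtain ⟨hr0, hrz⟩ := hr
    have hzero : Set.Ioo p q ⊆ {δ : ℝ | (∏ i, (1 + x i * δ)) - δ = 0} := by
      intro t ht
      obtain ⟨hpt, htq⟩ := ht
      have ht0 : (0 : ℝ) < t := hp0.trans hpt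
      -- upper bound via segment
      have hub := hconv.le_on_segment (Set.mem_Ici.mpr hp0.le)
        (Set.mem_Ici.mpr (by linarith : (0:ℝ) ≤ q)) (by
        rw [segment_eq_Icc hpq.le]
        exact ⟨hpt.le, htq.le⟩)
      rw [hpz, hqz] at hub
      simp only [max_self] at hub
      -- lower bound via slopes
      have hslope := hconv.slope_mono_adjacent (Set.mem_Ici.mpr ht0.le)
        (Set.mem_Ici.mpr hr0.le) htq hqr
      rw [hqz, hrz] at hslope
      have hqt : (0:ℝ) < q - t := by linarith
      have hrq : (0:ℝ) < r - q := by linarith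
      simp only [zero_sub, sub_zero, zero_div] at hslope
      have hlb : 0 ≤ (∏ i, (1 + x i * t)) - t := by
        by_contra hneg
        push_neg at hneg
        have : 0 < -((∏ i, (1 + x i * t)) - t) / (q - t) := div_pos (by linarith) hqt
        linarith
      show (∏ i, (1 + x i * t)) - t = 0
      linarith
    have hIf : (Set.Ioo p q).Finite := hfin.subset hzero
    exact (Set.Ioo_infinite hpq) hIf
  -- conclude
  by_contra hle
  push_neg at hle
  obtain ⟨a, b, haS, hbS, hab⟩ := Set.one_lt_encard_iff.mp (lt_trans (by norm_num : (1:ℕ∞) < 2) hle)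
  obtain ⟨c, hcS, hc⟩ : ∃ c ∈ S, c ∉ ({a, b} : Set ℝ) := by
    by_contra hsub
    push_neg at hsub
    have : S.encard ≤ 2 := le_trans (Set.encard_mono hsub) (Set.encard_pair hab).le
    exact absurd this (not_le.2 hle)
  simp only [Set.mem_insert_iff, Set.mem_singleton_iff, not_or] at hc
  have hca : c ≠ a := hc.1
  have hcb : c ≠ b := hc.2
  rcases hab.lt_or_gt with h1 | h1 <;> rcases hca.lt_or_gt with h2 | h2 <;>
    rcases hcb.lt_or_gt with h3 | h3
  · exact key3 c a b h2 h1 hcS haS hbS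
  · linarith
  · exact key3 a c b h2 h3 haS hcS hbS
  · exact key3 a b c h1 h3 haS hbS hcS
  · exact key3 c b a h3 h1 hcS hbS haS
  · exact key3 b c a h3 h2 hbS hcS haS
  · linarith
  · exact key3 b a c h1 h2 hbS haS hcS
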